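/- Fix m ≥ 1, a cost vector c : Fin m → ℝ with c_j > 0 for all j, and an integer d ≥ 1. There exists a deterministic online fractional algorithm A (nonnegative, monotone under prefix extension, and online feasible) such that for every finite list L of nonempty traces over Fin m each of cardinality at most d, the weighted cost of A satisfies ∑_j c_j · A(L)_j ≤ 2 · ln(1 + d) · OPT_f^c(L), where OPT_f^c(L) is the infimum of ∑_j c_j x_j over all vectors x feasible for L. That is, there is a 2·ln(1+d)-competitive deterministic algorithm for the fractional online set cover problem, where d is the maximum number of sets containing any single requested element. -/

import Mathlib

open Real Finset

/-- `x : Fin m → ℝ` is feasible for the instance `L` (a finite list of membership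
traces): `x` is nonnegative and `∑_{j ∈ T} x_j ≥ 1` for every trace `T` in `L`. -/
def Feasible (m : ℕ) (x : Fin m → ℝ) (L : List (Finset (Fin m))) : Prop :=
  (∀ j, 0 ≤ x j) ∧ ∀ T ∈ L, 1 ≤ ∑ j ∈ T, x j

/-- The weighted fractional optimum of an instance `L` with cost vector `c`:
the infimum of `∑_j c_j x_j` over all `x` feasible for `L`. -/
noncomputable def OPTfc (m : ℕ) (c : Fin m → ℝ) (L : List (Finset (Fin m))) : ℝ :=
  sInf {y | ∃ x : Fin m → ℝ, Feasible m x L ∧ y = ∑ j, c j * x j}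

namespace OFC

/-- The potential function of the continuous primal–dual algorithm. -/
noncomputable def pot (d : ℕ) (c y : ℝ) : ℝ := (Real.exp (y / c * Real.log (1 + d)) - 1) / d

variable {d : ℕ} {c : ℝ}

lemma log_pos' (hd : 1 ≤ d) : 0 < Real.log (1 + (d : ℝ)) := by
  apply Real.log_pos
  have : (1 : ℝ) ≤ d := by exact_mod_cast hd
  linarith

lemma dpos (hd : 1 ≤ d) : (0 : ℝ) < d := by exact_mod_cast hd

lemma pot_zero : pot d c 0 = 0 := by simp [pot]

lemma pot_mono (hd : 1 ≤ d) (hc : 0 < c) : Monotone (pot d c) := by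
  intro a b hab
  have h1 := log_pos' hd
  have h2 := dpos hd
  unfold pot
  gcongr

lemma pot_nonneg (hd : 1 ≤ d) (hc : 0 < c) {y : ℝ} (hy : 0 ≤ y) : 0 ≤ pot d c y := by
  simpa [pot_zero] using pot_mono hd hc hy

lemma pot_ge (hd : 1 ≤ d) : -(1 / (d : ℝ)) ≤ pot d c y := by
  have h2 := dpos hd
  have := Real.exp_pos (y / c * Real.log (1 + d))
  rw [pot, neg_div', div_le_div_iff_of_pos_right h2]
  linarith

lemma pot_at_c (hd : 1 ≤ d) (hc : 0 < c) : pot d c c = 1 := by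
  have h2 := dpos hd
  rw [pot, div_self hc.ne', one_mul, Real.exp_log (by linarith), add_sub_cancel_left,
    div_self h2.ne']

lemma pot_le_one_imp (hd : 1 ≤ d) (hc : 0 < c) {y : ℝ} (h : pot d c y ≤ 1) : y ≤ c := by
  have h1 := log_pos' hd
  have h2 := dpos hd
  rw [pot, div_le_one h2] at h
  have h3 : Real.exp (y / c * Real.log (1 + d)) ≤ Real.exp (Real.log (1 + d)) := by
    rw [Real.exp_log (by linarith)]; linarith
  have h4 : y / c * Real.log (1 + d) ≤ Real.log (1 + d) := Real.exp_le_exp.1 h3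
  have h5 : y / c ≤ 1 := by
    by_contra h5
    push_neg at h5
    nlinarith
  calc y = y / c * c := by field_simp
  _ ≤ 1 * c := by nlinarith
  _ = c := one_mul c

lemma pot_cont : Continuous (pot d c) := by
  unfold pot; fun_prop

lemma pot_hasDerivAt (y : ℝ) :
    HasDerivAt (pot d c) (Real.log (1 + d) / c * (pot d c y + 1 / d)) y := by
  have hfun : pot d c = fun y : ℝ => (Real.exp (y * (Real.log (1 + (d : ℝ)) / c)) - 1) / d := by
    funext z
    rw [pot, div_mul_eq_mul_div, mul_div_assoc]
  have h : HasDerivAt (fun y : ℝ => (Real.exp (y * (Real.log (1 + (d : ℝ)) / c)) - 1) / d)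
      (Real.exp (y * (Real.log (1 + (d : ℝ)) / c)) * (Real.log (1 + (d : ℝ)) / c) / d) y :=
    (((hasDerivAt_mul_const _).exp).sub_const 1).div_const _
  rw [hfun]
  convert h using 1
  simp only [hfun]
  ring

section Algo

variable {m : ℕ}

/-- The dual increment when trace `T` arrives with current accumulated duals `Y`. -/
noncomputable def tstar (d : ℕ) (c Y : Fin m → ℝ) (T : Finset (Fin m)) : ℝ :=
  if (∑ j ∈ T, pot d (c j) (Y j)) < 1 ∧ T.Nonempty then
    sInf {t : ℝ | 0 ≤ t ∧ 1 ≤ ∑ j ∈ T, pot d (c j) (Y j + t)}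
  else 0

/-- One step of the algorithm. -/
noncomputable def step (d : ℕ) (c : Fin m → ℝ) (Y : Fin m → ℝ) (T : Finset (Fin m)) :
    Fin m → ℝ :=
  fun j => if j ∈ T then Y j + tstar d c Y T else Y j

variable {c Y : Fin m → ℝ} {T : Finset (Fin m)}

lemma tstar_nonneg : 0 ≤ tstar d c Y T := by
  unfold tstar
  split
  · exact Real.sInf_nonneg fun x hx => hx.1
  · exact le_rfl

lemma le_step (j : Fin m) : Y j ≤ step d c Y T j := by
  unfold step
  split
  · linarith [tstar_nonneg (d := d) (c := c) (Y := Y) (T := T)]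
  · exact le_rfl

lemma le_foldl (L : List (Finset (Fin m))) :
    ∀ (Y : Fin m → ℝ) (j : Fin m), Y j ≤ (L.foldl (step d c) Y) j := by
  induction L with
  | nil => intro Y j; exact le_rfl
  | cons T L ih => intro Y j; exact (le_step j).trans (ih _ j)

/-- The key hitting-time fact: if `T` is not yet covered, the dual increment `tstar`
brings the coverage of `T` to exactly `1`, and coverage stays `≤ 1` along the way. -/
lemma hit (hd : 1 ≤ d) (hc : ∀ j, 0 < c j) (hY : ∀ j, 0 ≤ Y j) (hne : T.Nonempty)
    (hlt : ∑ j ∈ T, pot d (c j) (Y j) < 1) :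
    (∑ j ∈ T, pot d (c j) (Y j + tstar d c Y T)) = 1 ∧
      ∀ s ∈ Set.Icc 0 (tstar d c Y T), (∑ j ∈ T, pot d (c j) (Y j + s)) ≤ 1 := by
  set g : ℝ → ℝ := fun t => ∑ j ∈ T, pot d (c j) (Y j + t) with hg_def
  have hg : Continuous g := by
    apply continuous_finset_sum
    intro j _
    exact pot_cont.comp (continuous_const.add continuous_id)
  set S : Set ℝ := {t : ℝ | 0 ≤ t ∧ 1 ≤ g t} with hS_def
  obtain ⟨j0, hj0⟩ := hne
  have hSne : S.Nonempty := by
    refine ⟨c j0, (hc j0).le, ?_⟩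
    have h1 : pot d (c j0) (c j0) ≤ pot d (c j0) (Y j0 + c j0) :=
      pot_mono hd (hc j0) (by linarith [hY j0])
    rw [pot_at_c hd (hc j0)] at h1
    calc (1 : ℝ) ≤ pot d (c j0) (Y j0 + c j0) := h1
    _ ≤ g (c j0) := by
        apply Finset.single_le_sum (f := fun j => pot d (c j) (Y j + c j0)) _ hj0
        intro j _
        exact pot_nonneg hd (hc j) (by linarith [hY j, (hc j0).le])
  have hbdd : BddBelow S := ⟨0, fun x hx => hx.1⟩
  have hclosed : IsClosed S := by
    have : S = {t : ℝ | 0 ≤ t} ∩ {t : ℝ | 1 ≤ g t} := by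
      ext t; simp [hS_def, Set.mem_setOf_eq]
    rw [this]
    exact (isClosed_le continuous_const continuous_id).inter
      (isClosed_le continuous_const hg)
  have hmem : sInf S ∈ S := hclosed.csInf_mem hSne hbdd
  have htpos : 0 ≤ sInf S := hmem.1
  have hcond : (∑ j ∈ T, pot d (c j) (Y j)) < 1 ∧ T.Nonempty := ⟨hlt, ⟨j0, hj0⟩⟩
  have hts : tstar d c Y T = sInf S := by
    rw [tstar, if_pos hcond]
  -- IVT: there is t' ∈ [0, sInf S] with g t' = 1; minimality forces t' = sInf S.
  have hg0 : g 0 < 1 := by simpa [hg_def] using hlt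
  have h1mem : (1 : ℝ) ∈ Set.Icc (g 0) (g (sInf S)) := ⟨hg0.le, hmem.2⟩
  obtain ⟨t', ht'mem, ht'⟩ := intermediate_value_Icc htpos hg.continuousOn h1mem
  have ht'S : t' ∈ S := ⟨ht'mem.1, ht'.ge⟩
  have h1 : sInf S ≤ t' := csInf_le hbdd ht'S
  have h2 : t' = sInf S := le_antisymm ht'mem.2 h1
  have hgt : g (sInf S) = 1 := by rw [← h2, ht']
  constructor
  · rw [hts]; exact hgt
  · intro s hs
    rw [hts] at hs
    rcases eq_or_lt_of_le hs.2 with h | h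
    · rw [hg_def] at hgt; rw [h]; exact le_of_eq hgt
    · by_contra hcon
      push_neg at hcon
      have : s ∈ S := ⟨hs.1, hcon.le⟩
      exact absurd (csInf_le hbdd this) (not_le.2 h)

end Algo

section Algo2

variable {m : ℕ} {c Y : Fin m → ℝ} {T : Finset (Fin m)} {d : ℕ}

lemma step_nonneg (hY : ∀ j, 0 ≤ Y j) : ∀ j, 0 ≤ step d c Y T j :=
  fun j => (hY j).trans (le_step j)

lemma step_covers (hd : 1 ≤ d) (hc : ∀ j, 0 < c j) (hY : ∀ j, 0 ≤ Y j)
    (hne : T.Nonempty) : 1 ≤ ∑ j ∈ T, pot d (c j) (step d c Y T j) := by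
  by_cases hcond : (∑ j ∈ T, pot d (c j) (Y j)) < 1 ∧ T.Nonempty
  · have h := (hit hd hc hY hne hcond.1).1
    have heq : ∑ j ∈ T, pot d (c j) (step d c Y T j)
        = ∑ j ∈ T, pot d (c j) (Y j + tstar d c Y T) :=
      Finset.sum_congr rfl fun j hj => by rw [step, if_pos hj]
    rw [heq, h]
  · have h1 : 1 ≤ ∑ j ∈ T, pot d (c j) (Y j) := by
      by_contra hcon
      exact hcond ⟨not_le.1 hcon, hne⟩
    have ht : tstar d c Y T = 0 := by rw [tstar, if_neg hcond]
    have heq : ∑ j ∈ T, pot d (c j) (step d c Y T j) = ∑ j ∈ T, pot d (c j) (Y j) :=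
      Finset.sum_congr rfl fun j hj => by rw [step, if_pos hj, ht, add_zero]
    rw [heq]; exact h1

lemma step_pot_le (hd : 1 ≤ d) (hc : ∀ j, 0 < c j) (hY : ∀ j, 0 ≤ Y j)
    (hpot : ∀ j, pot d (c j) (Y j) ≤ 1) : ∀ j, pot d (c j) (step d c Y T j) ≤ 1 := by
  intro j
  rw [step]
  split
  · rename_i hj
    by_cases hcond : (∑ i ∈ T, pot d (c i) (Y i)) < 1 ∧ T.Nonempty
    · have h := (hit hd hc hY hcond.2 hcond.1).1
      calc pot d (c j) (Y j + tstar d c Y T)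
          ≤ ∑ i ∈ T, pot d (c i) (Y i + tstar d c Y T) := by
            apply Finset.single_le_sum (f := fun i => pot d (c i) (Y i + tstar d c Y T)) _ hj
            intro i _
            exact pot_nonneg hd (hc i) (by linarith [hY i, tstar_nonneg (d := d) (c := c) (Y := Y) (T := T)])
      _ = 1 := h
    · rw [tstar, if_neg hcond, add_zero]; exact hpot j
  · exact hpot j

/-- The per-step primal cost increase is at most `2 log(1+d)` times the dual increase. -/
lemma step_cost (hd : 1 ≤ d) (hc : ∀ j, 0 < c j) (hY : ∀ j, 0 ≤ Y j)
    (hcard : T.card ≤ d) :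
    ∑ j, c j * pot d (c j) (step d c Y T j) ≤
      ∑ j, c j * pot d (c j) (Y j) + 2 * Real.log (1 + d) * tstar d c Y T := by
  by_cases hcond : (∑ j ∈ T, pot d (c j) (Y j)) < 1 ∧ T.Nonempty
  · set t := tstar d c Y T with ht_def
    have htnn : 0 ≤ t := tstar_nonneg
    obtain ⟨hfin, hcov⟩ := hit hd hc hY hcond.2 hcond.1
    set L : ℝ := Real.log (1 + (d : ℝ)) with hL_def
    have hLpos : 0 < L := log_pos' hd
    have hdpos : (0 : ℝ) < d := dpos hd
    set P : ℝ → ℝ := fun s => ∑ j ∈ T, c j * pot d (c j) (Y j + s) with hP_def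
    set P' : ℝ → ℝ := fun s => ∑ j ∈ T, c j * (L / c j * (pot d (c j) (Y j + s) + 1 / d))
      with hP'_def
    have hP : ∀ s : ℝ, HasDerivAt P (P' s) s := by
      intro s
      apply HasDerivAt.fun_sum
      intro j _
      have h1 : HasDerivAt (fun s : ℝ => Y j + s) 1 s := (hasDerivAt_id s).const_add (Y j)
      have h2 := (pot_hasDerivAt (d := d) (c := c j) (Y j + s)).comp s h1
      have h3 := h2.const_mul (c j)
      simpa [Function.comp, mul_one] using h3
    have hP'eq : ∀ s : ℝ, P' s = L * ((∑ j ∈ T, pot d (c j) (Y j + s)) + T.card * (1 / d)) := by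
      intro s
      have key : ∀ j ∈ T, c j * (L / c j * (pot d (c j) (Y j + s) + 1 / d))
          = L * pot d (c j) (Y j + s) + L * (1 / d) := by
        intro j _
        rw [show c j * (L / c j * (pot d (c j) (Y j + s) + 1 / (d : ℝ)))
            = (c j / c j) * (L * pot d (c j) (Y j + s) + L * (1 / (d : ℝ))) from by ring,
          div_self (hc j).ne', one_mul]
      calc P' s = ∑ j ∈ T, (L * pot d (c j) (Y j + s) + L * (1 / (d : ℝ))) :=
            Finset.sum_congr rfl key
      _ = L * ((∑ j ∈ T, pot d (c j) (Y j + s)) + T.card * (1 / d)) := by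
            rw [Finset.sum_add_distrib, Finset.sum_const, ← Finset.mul_sum, nsmul_eq_mul]
            ring
    have hbound : ∀ s ∈ Set.Ico (0 : ℝ) t, ‖P' s‖ ≤ 2 * L := by
      intro s hs
      have hsIcc : s ∈ Set.Icc (0 : ℝ) t := ⟨hs.1, hs.2.le⟩
      have hcov' := hcov s hsIcc
      have hlow : -(T.card * (1 / (d : ℝ))) ≤ ∑ j ∈ T, pot d (c j) (Y j + s) := by
        have : ∀ j ∈ T, -(1 / (d : ℝ)) ≤ pot d (c j) (Y j + s) := fun j _ => pot_ge hd
        calc -(T.card * (1 / (d : ℝ))) = ∑ _j ∈ T, -(1 / (d : ℝ)) := by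
              rw [Finset.sum_const, nsmul_eq_mul]; ring
        _ ≤ ∑ j ∈ T, pot d (c j) (Y j + s) := Finset.sum_le_sum this
      have hcd : (T.card : ℝ) * (1 / d) ≤ 1 := by
        rw [mul_one_div, div_le_one hdpos]
        exact_mod_cast hcard
      have hcd0 : 0 ≤ (T.card : ℝ) * (1 / d) := by positivity
      rw [hP'eq s, Real.norm_eq_abs]
      rw [abs_le]
      constructor
      · nlinarith
      · nlinarith
    have hmvt := norm_image_sub_le_of_norm_deriv_le_segment'
      (f := P) (f' := P') (a := 0) (b := t) (C := 2 * L)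
      (fun x _ => (hP x).hasDerivWithinAt) hbound t (Set.right_mem_Icc.2 htnn)
    rw [Real.norm_eq_abs, sub_zero] at hmvt
    have hPt : P t - P 0 ≤ 2 * L * t := (le_abs_self _).trans hmvt
    -- relate to the full sums
    have hsplit : ∀ Z : Fin m → ℝ, ∑ j, c j * pot d (c j) (Z j)
        = ∑ j ∈ T, c j * pot d (c j) (Z j) + ∑ j ∈ Tᶜ, c j * pot d (c j) (Z j) :=
      fun Z => (Finset.sum_add_sum_compl T _).symm
    have h1 : ∑ j, c j * pot d (c j) (step d c Y T j)
        = P t + ∑ j ∈ Tᶜ, c j * pot d (c j) (Y j) := by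
      rw [hsplit (step d c Y T)]
      congr 1
      · exact Finset.sum_congr rfl fun j hj => by rw [step, if_pos hj]
      · exact Finset.sum_congr rfl fun j hj => by
          rw [step, if_neg (by simpa using hj)]
    have h2 : ∑ j, c j * pot d (c j) (Y j)
        = P 0 + ∑ j ∈ Tᶜ, c j * pot d (c j) (Y j) := by
      rw [hsplit Y]
      congr 1
      exact Finset.sum_congr rfl fun j _ => by rw [add_zero]
    rw [h1, h2]
    linarith
  · have ht : tstar d c Y T = 0 := by rw [tstar, if_neg hcond]
    have heq : ∀ j, step d c Y T j = Y j := by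
      intro j; rw [step, ht]; split <;> simp
    simp only [heq, ht, mul_zero, add_zero]
    exact le_rfl

end Algo2

section Algo3

variable {m : ℕ} {c : Fin m → ℝ} {d : ℕ}

lemma foldl_feasible (hd : 1 ≤ d) (hc : ∀ j, 0 < c j) :
    ∀ (L : List (Finset (Fin m))) (Y : Fin m → ℝ), (∀ j, 0 ≤ Y j) →
      ∀ T ∈ L, T.Nonempty → 1 ≤ ∑ j ∈ T, pot d (c j) ((L.foldl (step d c) Y) j) := by
  intro L
  induction L with
  | nil => intro Y _ T hT; simp at hT
  | cons T0 L ih =>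
    intro Y hY T hT hTne
    rcases List.mem_cons.1 hT with h | h
    · subst h
      have h1 := step_covers (Y := Y) hd hc hY hTne
      have h2 : ∀ j ∈ T, pot d (c j) (step d c Y T j)
          ≤ pot d (c j) (((T :: L).foldl (step d c) Y) j) := by
        intro j _
        exact pot_mono hd (hc j) (by simpa using le_foldl L (step d c Y T) j)
      exact h1.trans (Finset.sum_le_sum h2)
    · simpa using ih (step d c Y T0) (step_nonneg hY) T h hTne

lemma foldl_pot_le (hd : 1 ≤ d) (hc : ∀ j, 0 < c j) :
    ∀ (L : List (Finset (Fin m))) (Y : Fin m → ℝ), (∀ j, 0 ≤ Y j) →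
      (∀ j, pot d (c j) (Y j) ≤ 1) → ∀ j, pot d (c j) ((L.foldl (step d c) Y) j) ≤ 1 := by
  intro L
  induction L with
  | nil => intro Y _ h j; simpa using h j
  | cons T0 L ih =>
    intro Y hY hpot j
    simpa using ih (step d c Y T0) (step_nonneg hY) (step_pot_le hd hc hY hpot) j

lemma cost_bound (hd : 1 ≤ d) (hc : ∀ j, 0 < c j) (x : Fin m → ℝ) (hx : ∀ j, 0 ≤ x j) :
    ∀ (L : List (Finset (Fin m))) (Y : Fin m → ℝ), (∀ j, 0 ≤ Y j) →
      (∀ T ∈ L, T.card ≤ d) → (∀ T ∈ L, 1 ≤ ∑ j ∈ T, x j) →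
      ∑ j, c j * pot d (c j) ((L.foldl (step d c) Y) j) ≤
        ∑ j, c j * pot d (c j) (Y j) +
          2 * Real.log (1 + d) * ∑ j, x j * ((L.foldl (step d c) Y) j - Y j) := by
  intro L
  induction L with
  | nil => intro Y _ _ _; simp
  | cons T L ih =>
    intro Y hY hcard hxfeas
    have hY' : ∀ j, 0 ≤ step d c Y T j := step_nonneg hY
    have h1 := ih (step d c Y T) hY' (fun U hU => hcard U (List.mem_cons_of_mem _ hU))
      (fun U hU => hxfeas U (List.mem_cons_of_mem _ hU))
    have h2 := step_cost hd hc hY (hcard T List.mem_cons_self)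
    have hLnn : 0 ≤ 2 * Real.log (1 + (d : ℝ)) := by
      have := log_pos' hd; linarith
    have h3 : tstar d c Y T ≤ ∑ j, x j * (step d c Y T j - Y j) := by
      have heq : ∀ j, x j * (step d c Y T j - Y j)
          = if j ∈ T then x j * tstar d c Y T else 0 := by
        intro j
        rw [step]
        split <;> ring
      rw [Finset.sum_congr rfl fun j _ => heq j, Finset.sum_ite_mem, Finset.univ_inter,
        ← Finset.sum_mul]
      calc tstar d c Y T = 1 * tstar d c Y T := (one_mul _).symm
      _ ≤ (∑ j ∈ T, x j) * tstar d c Y T :=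
          mul_le_mul_of_nonneg_right (hxfeas T List.mem_cons_self) tstar_nonneg
    have h4 : 2 * Real.log (1 + (d : ℝ)) * tstar d c Y T
        ≤ 2 * Real.log (1 + (d : ℝ)) * ∑ j, x j * (step d c Y T j - Y j) :=
      mul_le_mul_of_nonneg_left h3 hLnn
    have hsum : ∑ j, x j * ((L.foldl (step d c) (step d c Y T)) j - Y j)
        = (∑ j, x j * ((L.foldl (step d c) (step d c Y T)) j - step d c Y T j))
          + ∑ j, x j * (step d c Y T j - Y j) := by
      rw [← Finset.sum_add_distrib]
      exact Finset.sum_congr rfl fun j _ => by ring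
    simp only [List.foldl_cons]
    rw [hsum]
    linarith

end Algo3

end OFC


theorem online_fractional_competitive (m d : ℕ) (hm : 1 ≤ m) (hd : 1 ≤ d)
    (c : Fin m → ℝ) (hc : ∀ j, 0 < c j) :
    ∃ A : List (Finset (Fin m)) → Fin m → ℝ,
      (∀ L j, 0 ≤ A L j) ∧
      (∀ L L' : List (Finset (Fin m)), L <+: L' → ∀ j, A L j ≤ A L' j) ∧
      (∀ L : List (Finset (Fin m)), (∀ T ∈ L, T.Nonempty) → Feasible m (A L) L) ∧
      ∀ L : List (Finset (Fin m)), (∀ T ∈ L, T.Nonempty ∧ T.card ≤ d) →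
        ∑ j, c j * A L j ≤ 2 * Real.log (1 + (d : ℝ)) * OPTfc m c L := by
  classical
  refine ⟨fun L j => OFC.pot d (c j) ((L.foldl (OFC.step d c) fun _ => (0 : ℝ)) j),
    ?_, ?_, ?_, ?_⟩
  · intro L j
    exact OFC.pot_nonneg hd (hc j) (OFC.le_foldl L (fun _ => (0 : ℝ)) j)
  · rintro L L' ⟨r, rfl⟩ j
    simp only [List.foldl_append]
    exact OFC.pot_mono hd (hc j) (OFC.le_foldl r _ j)
  · intro L hne
    refine ⟨fun j => OFC.pot_nonneg hd (hc j) (OFC.le_foldl L (fun _ => (0 : ℝ)) j), ?_⟩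
    intro T hT
    exact OFC.foldl_feasible hd hc L (fun _ => (0 : ℝ)) (fun _ => le_rfl) T hT (hne T hT)
  · intro L hL
    set YL := L.foldl (OFC.step d c) fun _ => (0 : ℝ) with hYL_def
    have hYLc : ∀ j, YL j ≤ c j := by
      intro j
      refine OFC.pot_le_one_imp hd (hc j) ?_
      exact OFC.foldl_pot_le hd hc L (fun _ => (0 : ℝ)) (fun _ => le_rfl)
        (fun j => by simp [OFC.pot_zero]) j
    have hYLnn : ∀ j, 0 ≤ YL j := fun j => OFC.le_foldl L (fun _ => (0 : ℝ)) j
    have hLpos : 0 < 2 * Real.log (1 + (d : ℝ)) := by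
      have := OFC.log_pos' (d := d) hd; linarith
    -- the competitive bound against any feasible solution
    have key : ∀ x : Fin m → ℝ, Feasible m x L →
        ∑ j, c j * OFC.pot d (c j) (YL j) ≤
          2 * Real.log (1 + (d : ℝ)) * ∑ j, c j * x j := by
      intro x hx
      have h1 := OFC.cost_bound hd hc x hx.1 L (fun _ => (0 : ℝ)) (fun _ => le_rfl)
        (fun T hT => (hL T hT).2) hx.2
      have h2 : ∑ j, c j * OFC.pot d (c j) ((0 : ℝ)) = 0 := by
        simp [OFC.pot_zero]
      have h3 : ∑ j, x j * (YL j - 0) ≤ ∑ j, c j * x j := by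
        apply Finset.sum_le_sum
        intro j _
        rw [sub_zero, mul_comm (c j) (x j)]
        exact mul_le_mul_of_nonneg_left (hYLc j) (hx.1 j)
      calc ∑ j, c j * OFC.pot d (c j) (YL j)
          ≤ (∑ j, c j * OFC.pot d (c j) ((0 : ℝ))) +
            2 * Real.log (1 + (d : ℝ)) * ∑ j, x j * (YL j - 0) := h1
      _ ≤ 0 + 2 * Real.log (1 + (d : ℝ)) * ∑ j, c j * x j := by
          rw [h2]
          exact add_le_add le_rfl (mul_le_mul_of_nonneg_left h3 hLpos.le)
      _ = 2 * Real.log (1 + (d : ℝ)) * ∑ j, c j * x j := zero_add _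
    -- pass to the infimum
    set Sset := {y | ∃ x : Fin m → ℝ, Feasible m x L ∧ y = ∑ j, c j * x j} with hS_def
    have hSne : Sset.Nonempty := by
      refine ⟨∑ j, c j * 1, fun _ => (1 : ℝ), ⟨fun j => zero_le_one, ?_⟩, rfl⟩
      intro T hT
      have hcard : 1 ≤ T.card := Finset.card_pos.2 ((hL T hT).1)
      have : (1 : ℝ) ≤ T.card := by exact_mod_cast hcard
      simpa using this
    have hlow : ∀ y ∈ Sset, (∑ j, c j * OFC.pot d (c j) (YL j)) / (2 * Real.log (1 + (d : ℝ))) ≤ y := by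
      rintro y ⟨x, hx, rfl⟩
      rw [div_le_iff₀ hLpos]
      calc ∑ j, c j * OFC.pot d (c j) (YL j)
          ≤ 2 * Real.log (1 + (d : ℝ)) * ∑ j, c j * x j := key x hx
      _ = (∑ j, c j * x j) * (2 * Real.log (1 + (d : ℝ))) := mul_comm _ _
    have hfin : (∑ j, c j * OFC.pot d (c j) (YL j)) / (2 * Real.log (1 + (d : ℝ)))
        ≤ sInf Sset := le_csInf hSne hlow
    rw [div_le_iff₀ hLpos] at hfin
    rw [OPTfc, ← hS_def]
    calc ∑ j, c j * OFC.pot d (c j) (YL j) ≤ sInf Sset * (2 * Real.log (1 + (d : ℝ))) := hfin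
    _ = 2 * Real.log (1 + (d : ℝ)) * sInf Sset := mul_comm _ _
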